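/- A linear map Λ from M_n(ℂ) to M_m(ℂ) is completely positive if and only if its Choi matrix C(Λ) is positive semidefinite. -/

import Mathlib

open scoped Kronecker ComplexOrder

/-- The Choi matrix of a linear map `Λ : M_n(ℂ) → M_m(ℂ)`:
`C(Λ) = ∑ i j, Λ(E i j) ⊗ₖ E i j`, a matrix indexed by `Fin m × Fin n`. -/
noncomputable def choi {n m : ℕ}
    (Λ : Matrix (Fin n) (Fin n) ℂ →ₗ[ℂ] Matrix (Fin m) (Fin m) ℂ) :
    Matrix (Fin m × Fin n) (Fin m × Fin n) ℂ :=
  ∑ i : Fin n, ∑ j : Fin n,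
    (Λ (Matrix.single i j 1)) ⊗ₖ (Matrix.single i j 1)

/-- `Λ ⊗ id_N` : the unique linear map with `(Λ ⊗ id_N)(A ⊗ₖ B) = Λ(A) ⊗ₖ B`,
written out explicitly. -/
noncomputable def tensorId {n m : ℕ}
    (Λ : Matrix (Fin n) (Fin n) ℂ →ₗ[ℂ] Matrix (Fin m) (Fin m) ℂ) (N : ℕ)
    (M : Matrix (Fin n × Fin N) (Fin n × Fin N) ℂ) :
    Matrix (Fin m × Fin N) (Fin m × Fin N) ℂ :=
  Matrix.of fun p q => Λ (Matrix.of fun i j => M (i, p.2) (j, q.2)) p.1 q.1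

/-- `Λ` is `N`-positive: `Λ ⊗ id_N` maps PSD matrices to PSD matrices. -/
def NPos {n m : ℕ}
    (Λ : Matrix (Fin n) (Fin n) ℂ →ₗ[ℂ] Matrix (Fin m) (Fin m) ℂ) (N : ℕ) : Prop :=
  ∀ M : Matrix (Fin n × Fin N) (Fin n × Fin N) ℂ,
    M.PosSemidef → (tensorId Λ N M).PosSemidef

/-- `Λ` is completely positive: `N`-positive for every `N ≥ 1`. -/
def CP {n m : ℕ}
    (Λ : Matrix (Fin n) (Fin n) ℂ →ₗ[ℂ] Matrix (Fin m) (Fin m) ℂ) : Prop :=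
  ∀ N : ℕ, 1 ≤ N → NPos Λ N

open Matrix

lemma choi_apply {n m : ℕ}
    (Λ : Matrix (Fin n) (Fin n) ℂ →ₗ[ℂ] Matrix (Fin m) (Fin m) ℂ)
    (a c : Fin m) (i j : Fin n) :
    choi Λ (a, i) (c, j) = Λ (Matrix.single i j 1) a c := by
  simp [choi, Matrix.sum_apply, Matrix.single, ite_and, mul_ite, mul_one, mul_zero]

lemma lam_apply {n m : ℕ}
    (Λ : Matrix (Fin n) (Fin n) ℂ →ₗ[ℂ] Matrix (Fin m) (Fin m) ℂ)
    (A : Matrix (Fin n) (Fin n) ℂ) (a c : Fin m) :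
    Λ A a c = ∑ i : Fin n, ∑ j : Fin n, A i j * Λ (Matrix.single i j 1) a c := by
  have hsb : ∀ i j : Fin n, Matrix.single i j (A i j)
      = A i j • Matrix.single i j (1 : ℂ) := fun i j => by
    rw [smul_single, smul_eq_mul, mul_one]
  conv_lhs => rw [matrix_eq_sum_single A]
  simp_rw [hsb]
  rw [map_sum, Matrix.sum_apply]
  refine Finset.sum_congr rfl fun i _ => ?_
  rw [map_sum, Matrix.sum_apply]
  refine Finset.sum_congr rfl fun j _ => ?_
  rw [_root_.map_smul, Matrix.smul_apply, smul_eq_mul]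

lemma sum_swap3 {n m N : ℕ} (f : Fin n → Fin n → (Fin m × Fin N) → ℂ) :
    ∑ i, ∑ j, ∑ k, f i j k = ∑ k, ∑ j, ∑ i, f i j k := by
  calc ∑ i, ∑ j, ∑ k, f i j k
      = ∑ j, ∑ i, ∑ k, f i j k := Finset.sum_comm
    _ = ∑ j, ∑ k, ∑ i, f i j k := Finset.sum_congr rfl fun _ _ => Finset.sum_comm
    _ = ∑ k, ∑ j, ∑ i, f i j k := Finset.sum_comm

lemma tensorId_eq_sum {n m N : ℕ}
    (Λ : Matrix (Fin n) (Fin n) ℂ →ₗ[ℂ] Matrix (Fin m) (Fin m) ℂ)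
    (Cm : Matrix (Fin m × Fin n) (Fin m × Fin n) ℂ)
    (hCm : choi Λ = Cmᴴ * Cm)
    (M : Matrix (Fin n × Fin N) (Fin n × Fin N) ℂ) :
    tensorId Λ N M = ∑ k : Fin m × Fin n,
      (Matrix.of fun (p : Fin m × Fin N) (q : Fin n × Fin N) =>
          if p.2 = q.2 then star (Cm k (p.1, q.1)) else 0) * M *
      (Matrix.of fun (p : Fin m × Fin N) (q : Fin n × Fin N) =>
          if p.2 = q.2 then star (Cm k (p.1, q.1)) else 0)ᴴ := by
  funext p q
  obtain ⟨a, s⟩ := p; obtain ⟨c, t⟩ := q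
  have hch : ∀ i j : Fin n, Λ (Matrix.single i j 1) a c
      = ∑ k : Fin m × Fin n, star (Cm k (a, i)) * Cm k (c, j) := by
    intro i j
    rw [← choi_apply, hCm, Matrix.mul_apply]
    simp [Matrix.conjTranspose_apply]
  rw [Matrix.sum_apply]
  show Λ (Matrix.of fun i j => M (i, s) (j, t)) a c = _
  rw [lam_apply]
  simp only [Matrix.of_apply, hch, Finset.mul_sum]
  rw [sum_swap3 (fun i j k => M (i, s) (j, t) * (star (Cm k (a, i)) * Cm k (c, j)))]
  refine Finset.sum_congr rfl fun k _ => ?_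
  simp only [Matrix.mul_apply, Matrix.conjTranspose_apply, Matrix.of_apply,
    Fintype.sum_prod_type, ite_mul, zero_mul, mul_ite, mul_zero,
    apply_ite (star : ℂ → ℂ), star_zero, star_star,
    Finset.sum_ite_eq, Finset.mem_univ, if_true, Finset.sum_mul, Finset.mul_sum]
  exact Finset.sum_congr rfl fun j _ => Finset.sum_congr rfl fun i _ => by ring

/-- `Λ` is completely positive iff its Choi matrix is positive semidefinite. -/
theorem cp_iff_choi_posSemidef {n m : ℕ}
    (Λ : Matrix (Fin n) (Fin n) ℂ →ₗ[ℂ] Matrix (Fin m) (Fin m) ℂ) :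
    CP Λ ↔ (choi Λ).PosSemidef := by
  constructor
  · intro hCP
    rcases Nat.eq_zero_or_pos n with hn | hn
    · subst hn
      have h0 : choi Λ = 0 := by simp [choi]
      rw [h0]; exact Matrix.PosSemidef.zero
    · set B0 : Matrix (Fin 1) (Fin n × Fin n) ℂ :=
        Matrix.of fun _ p => if p.1 = p.2 then 1 else 0 with hB0
      have hEq : choi Λ = tensorId Λ n (B0ᴴ * B0) := by
        funext p q
        obtain ⟨a, b⟩ := p; obtain ⟨c, d⟩ := q
        rw [choi_apply]
        show _ = Λ (Matrix.of fun i j => (B0ᴴ * B0) (i, b) (j, d)) a c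
        have hin : (Matrix.of fun i j => (B0ᴴ * B0) (i, b) (j, d))
            = Matrix.single b d (1 : ℂ) := by
          ext i j
          simp only [Matrix.of_apply, Matrix.mul_apply, Matrix.conjTranspose_apply, hB0,
            Fin.sum_univ_one, Matrix.single, ite_and]
          split_ifs <;> simp_all [eq_comm]
        rw [hin]
      rw [hEq]
      exact hCP n hn _ (Matrix.posSemidef_conjTranspose_mul_self B0)
  · intro hC N _ M hM
    open scoped MatrixOrder in
    obtain ⟨Cm, hCm⟩ := CStarAlgebra.nonneg_iff_eq_star_mul_self.mp hC.nonneg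
    rw [tensorId_eq_sum Λ Cm hCm M]
    refine Finset.sum_induction _ _ (fun A B hA hB => hA.add hB) Matrix.PosSemidef.zero ?_
    intro k _
    exact hM.mul_mul_conjTranspose_same _
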